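/- Let X be a metric space, A ⊆ X a subset, and U, V ⊆ A open in A. Define U' := {x ∈ X | d(x,U) < d(x, A \ U)} and similarly V'. Then U' ∩ V' ≠ ∅ if and only if U ∩ V ≠ ∅. -/

import Mathlib

theorem stmt6 {X : Type*} [MetricSpace X] (A U V : Set X) (hUA : U ⊆ A) (hVA : V ⊆ A)
    (hUopen : ∃ W : Set X, IsOpen W ∧ U = W ∩ A)
    (hVopen : ∃ W : Set X, IsOpen W ∧ V = W ∩ A) :
    ({x : X | EMetric.infEdist x U < EMetric.infEdist x (A \ U)} ∩
        {x : X | EMetric.infEdist x V < EMetric.infEdist x (A \ V)}).Nonempty ↔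
      (U ∩ V).Nonempty := by
  constructor
  · rintro ⟨x, hxU, hxV⟩
    by_contra h
    rw [Set.not_nonempty_iff_eq_empty] at h
    have hUV : U ⊆ A \ V := fun y hy => ⟨hUA hy, fun hyV => Set.eq_empty_iff_forall_notMem.mp h y ⟨hy, hyV⟩⟩
    have hVU : V ⊆ A \ U := fun y hy => ⟨hVA hy, fun hyU => Set.eq_empty_iff_forall_notMem.mp h y ⟨hyU, hy⟩⟩
    have h1 : EMetric.infEdist x (A \ U) ≤ EMetric.infEdist x V := EMetric.infEdist_anti hVU
    have h2 : EMetric.infEdist x (A \ V) ≤ EMetric.infEdist x U := EMetric.infEdist_anti hUV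
    exact absurd (lt_trans (lt_of_lt_of_le hxU h1) (lt_of_lt_of_le hxV h2)) (lt_irrefl _)
  · rintro ⟨x, hxU, hxV⟩
    refine ⟨x, ?_, ?_⟩
    · obtain ⟨W, hW, hWU⟩ := hUopen
      have hxW : x ∈ W := (hWU ▸ hxU).1
      have hzero : EMetric.infEdist x U = 0 := EMetric.infEdist_zero_of_mem hxU
      have hpos : 0 < EMetric.infEdist x (A \ U) := by
        rw [EMetric.infEdist, EMetric.infEdist_pos_iff_notMem_closure]
        intro hcl
        have : A \ U ⊆ Wᶜ := by
          intro y hy hyW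
          exact hy.2 (hWU ▸ ⟨hyW, hy.1⟩)
        exact (closure_minimal this hW.isClosed_compl hcl) hxW
      simpa [Set.mem_setOf_eq, hzero] using hpos
    · obtain ⟨W, hW, hWV⟩ := hVopen
      have hxW : x ∈ W := (hWV ▸ hxV).1
      have hzero : EMetric.infEdist x V = 0 := EMetric.infEdist_zero_of_mem hxV
      have hpos : 0 < EMetric.infEdist x (A \ V) := by
        rw [EMetric.infEdist, EMetric.infEdist_pos_iff_notMem_closure]
        intro hcl
        have : A \ V ⊆ Wᶜ := by
          intro y hy hyW
          exact hy.2 (hWV ▸ ⟨hyW, hy.1⟩)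
        exact (closure_minimal this hW.isClosed_compl hcl) hxW
      simpa [Set.mem_setOf_eq, hzero] using hpos
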